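/- Let G be a graph on n vertices with a partition of its vertex set into five parts X1,...,X5, and suppose E_f ≠ ∅. Then the number of induced copies of C5 in G whose vertex set contains two vertex-disjoint funky pairs is at most (1/2)·|E_f|·(|E_f| − dn − 1)·((y1 + y2 + (y3 + y4 + y5)/2)·n − 2). -/

import Mathlib

open scoped Classical

/-- The 5-cycle on `Fin 5`. -/
def C5 : SimpleGraph (Fin 5) := SimpleGraph.fromRel (fun i j => j = i + 1)

/-- Given a partition of the vertices of `G` into five parts (a map `P` to `Fin 5`),
a pair `{u,v}` with `u ∈ X_i`, `v ∈ X_j`, `i ≠ j` is funky if either `uv` is an edge and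
`|i−j| ∈ {2,3}`, or `uv` is a non-edge and `|i−j| ∈ {1,4}`. -/
def Funky {n : ℕ} (G : SimpleGraph (Fin n)) (P : Fin n → Fin 5) (u v : Fin n) : Prop :=
  (G.Adj u v ∧ (((P u : ℕ) : ℤ) - ((P v : ℕ) : ℤ)).natAbs ∈ ({2, 3} : Set ℕ)) ∨
  (¬ G.Adj u v ∧ (((P u : ℕ) : ℤ) - ((P v : ℕ) : ℤ)).natAbs ∈ ({1, 4} : Set ℕ))

/-- The set `E_f` of funky pairs, encoded as ordered pairs `(u,v)` with `u < v`. -/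
noncomputable def funkyPairs {n : ℕ} (G : SimpleGraph (Fin n)) (P : Fin n → Fin 5) :
    Finset (Fin n × Fin n) :=
  Finset.univ.filter fun p => p.1 < p.2 ∧ Funky G P p.1 p.2

/-- `d_f(v)`, the number of funky pairs containing the vertex `v`. -/
noncomputable def fdeg {n : ℕ} (G : SimpleGraph (Fin n)) (P : Fin n → Fin 5)
    (v : Fin n) : ℕ :=
  (Finset.univ.filter fun w => Funky G P v w).card

/-- `d`, the average number of funky pairs incident to a funky pair, divided by `n`:
`d = (Σ_{{u,v} ∈ E_f} (d_f(u) + d_f(v) − 2)) / (|E_f| · n)`. -/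
noncomputable def dAvg {n : ℕ} (G : SimpleGraph (Fin n)) (P : Fin n → Fin 5) : ℝ :=
  (∑ p ∈ funkyPairs G P, ((fdeg G P p.1 : ℝ) + (fdeg G P p.2 : ℝ) - 2)) /
    (((funkyPairs G P).card : ℝ) * (n : ℝ))

/-- `x_i = |X_i| / n`, the normalized size of the `i`-th part. -/
noncomputable def partFrac {n : ℕ} (P : Fin n → Fin 5) (i : Fin 5) : ℝ :=
  (Nat.card {v : Fin n // P v = i} : ℝ) / (n : ℝ)

/-- The number of induced copies of `C5` in `G` whose vertex set contains two
vertex-disjoint funky pairs. -/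
noncomputable def c5TwoDisjointFunky {n : ℕ} (G : SimpleGraph (Fin n))
    (P : Fin n → Fin 5) : ℕ :=
  Nat.card {s : Finset (Fin n) // s.card = 5 ∧
    Nonempty (G.induce (s : Set (Fin n)) ≃g C5) ∧
    ∃ a b c d : Fin n, a ∈ s ∧ b ∈ s ∧ c ∈ s ∧ d ∈ s ∧
      a ≠ c ∧ a ≠ d ∧ b ≠ c ∧ b ≠ d ∧ Funky G P a b ∧ Funky G P c d}

open Finset

lemma C5_adj {i j : Fin 5} : C5.Adj i j ↔ i ≠ j ∧ (j = i + 1 ∨ i = j + 1) := by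
  simp [C5, SimpleGraph.fromRel_adj]

instance : DecidableRel C5.Adj := fun i j => decidable_of_iff' _ C5_adj

lemma C5_deg : ∀ i : Fin 5, ((univ : Finset (Fin 5)).filter (fun j => C5.Adj i j)).card = 2 := by
  decide

/-- distance used in funkiness -/
def dN (t q : Fin 5) : ℕ := (((t : ℕ) : ℤ) - ((q : ℕ) : ℤ)).natAbs

/-- funkiness pattern with prescribed adjacency -/
def pattP (A : Prop) (t q : Fin 5) : Prop :=
  (A ∧ (dN t q = 2 ∨ dN t q = 3)) ∨ (¬ A ∧ (dN t q = 1 ∨ dN t q = 4))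

def pattB (b : Bool) (t q : Fin 5) : Prop := pattP (b = true) t q

instance (b : Bool) (t q : Fin 5) : Decidable (pattB b t q) :=
  decidable_of_iff ((b = true ∧ (dN t q = 2 ∨ dN t q = 3)) ∨ (¬ (b = true) ∧ (dN t q = 1 ∨ dN t q = 4))) Iff.rfl

lemma finClaim : ∀ (b1 b2 b3 b4 : Bool) (q1 q2 q3 q4 : Fin 5),
    b1.toNat + b2.toNat + b3.toNat + b4.toNat = 2 →
    ((univ : Finset (Fin 5)).filter (fun t =>
      ¬ pattB b1 t q1 ∧ ¬ pattB b2 t q2 ∧ ¬ pattB b3 t q3 ∧ ¬ pattB b4 t q4)).card ≤ 2 := by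
  decide

lemma funky_iff {n : ℕ} (G : SimpleGraph (Fin n)) (P : Fin n → Fin 5) (u v : Fin n) :
    Funky G P u v ↔ pattP (G.Adj u v) (P u) (P v) := by
  simp [Funky, pattP, dN, Set.mem_insert_iff]

lemma pattP_congr {A B : Prop} (h : A ↔ B) (t q : Fin 5) : pattP A t q ↔ pattP B t q := by
  unfold pattP; rw [h]

lemma funky_symm {n : ℕ} {G : SimpleGraph (Fin n)} {P : Fin n → Fin 5} {u v : Fin n}
    (h : Funky G P u v) : Funky G P v u := by
  unfold Funky at *
  rcases h with ⟨h1, h2⟩ | ⟨h1, h2⟩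
  · exact Or.inl ⟨h1.symm, by rwa [← Int.natAbs_neg, neg_sub] at h2⟩
  · exact Or.inr ⟨fun hh => h1 hh.symm, by rwa [← Int.natAbs_neg, neg_sub] at h2⟩

lemma funky_ne {n : ℕ} {G : SimpleGraph (Fin n)} {P : Fin n → Fin 5} {u v : Fin n}
    (h : Funky G P u v) : u ≠ v := by
  rintro rfl
  rcases h with ⟨h1, _⟩ | ⟨_, h2⟩
  · exact G.loopless.irrefl _ h1
  · simp [Set.mem_insert_iff] at h2

section Struct
variable {n : ℕ} {G : SimpleGraph (Fin n)}

lemma exists_embed {s : Finset (Fin n)} (φ : G.induce (s : Set (Fin n)) ≃g C5) :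
    ∃ f : Fin 5 → Fin n, Function.Injective f ∧ (∀ i, f i ∈ s) ∧ (∀ v ∈ s, ∃ i, f i = v) ∧
      ∀ i j, G.Adj (f i) (f j) ↔ C5.Adj i j := by
  refine ⟨fun i => (φ.symm i : (s : Set (Fin n))), ?_, ?_, ?_, ?_⟩
  · intro i j h
    exact φ.symm.injective (Subtype.ext h)
  · intro i; exact (φ.symm i).2
  · intro v hv; exact ⟨φ ⟨v, hv⟩, by simp⟩
  · intro i j
    constructor
    · intro h
      have : (G.induce (s : Set (Fin n))).Adj (φ.symm i) (φ.symm j) := h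
      rwa [← φ.symm.map_adj_iff]
    · intro h
      have := φ.symm.map_adj_iff.mpr h
      exact this

lemma deg_in_c5 {s : Finset (Fin n)} (φ : G.induce (s : Set (Fin n)) ≃g C5)
    (v : Fin n) (hv : v ∈ s) : (s.filter (fun w => G.Adj v w)).card = 2 := by
  obtain ⟨f, hinj, hmem, hsurj, hadj⟩ := exists_embed φ
  obtain ⟨i, rfl⟩ := hsurj v hv
  have key : ((univ : Finset (Fin 5)).filter (fun j => C5.Adj i j)).card
      = (s.filter (fun w => G.Adj (f i) w)).card := by
    refine Finset.card_nbij (fun j => f j) ?_ ?_ ?_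
    · intro j hj
      simp only [Finset.mem_coe, Finset.mem_filter, Finset.mem_univ, true_and] at hj ⊢
      exact ⟨hmem j, (hadj i j).mpr hj⟩
    · intro a _ b _ h
      exact hinj h
    · intro w hw
      simp only [Finset.coe_filter, Set.mem_setOf_eq, Finset.mem_univ, true_and] at hw ⊢
      obtain ⟨hws, hwadj⟩ := hw
      obtain ⟨j, rfl⟩ := hsurj w hws
      exact ⟨j, (hadj i j).mp hwadj, rfl⟩
  rw [← key, C5_deg i]

lemma c5_structure {s : Finset (Fin n)} (φ : G.induce (s : Set (Fin n)) ≃g C5)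
    {e : Fin n} (he : e ∈ s) :
    (((s.erase e)).filter (fun w => G.Adj e w)).card = 2 ∧
    ∀ v ∈ s.erase e, (G.Adj e v ↔ ((s.erase e).filter (fun w => G.Adj v w)).card = 1) := by
  have hs : s = insert e (s.erase e) := (Finset.insert_erase he).symm
  have hen : e ∉ s.erase e := Finset.notMem_erase e s
  constructor
  · have := deg_in_c5 φ e he
    rw [hs, Finset.filter_insert] at this
    simp only [G.loopless.irrefl e, if_false] at this
    exact this
  · intro v hv
    have hvs : v ∈ s := Finset.mem_of_mem_erase hv
    have h2 := deg_in_c5 φ v hvs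
    rw [hs, Finset.filter_insert] at h2
    by_cases hadj : G.Adj v e
    · rw [if_pos hadj, Finset.card_insert_of_notMem (fun hc => hen (Finset.mem_of_mem_filter e hc))] at h2
      constructor
      · intro _; omega
      · intro _; exact hadj.symm
    · rw [if_neg hadj] at h2
      constructor
      · intro hc; exact absurd hc.symm hadj
      · intro hc; omega

end Struct


section Main
variable {n : ℕ} (G : SimpleGraph (Fin n)) (P : Fin n → Fin 5)

def disjPair (p q : Fin n × Fin n) : Prop :=
  p.1 ≠ q.1 ∧ p.1 ≠ q.2 ∧ p.2 ≠ q.1 ∧ p.2 ≠ q.2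

noncomputable def Dord : Finset ((Fin n × Fin n) × (Fin n × Fin n)) :=
  (funkyPairs G P ×ˢ funkyPairs G P).filter fun pq => disjPair pq.1 pq.2

lemma fdeg_eq (v : Fin n) :
    ((funkyPairs G P).filter (fun q => q.1 = v ∨ q.2 = v)).card = fdeg G P v := by
  unfold fdeg
  refine Finset.card_nbij' (fun q => if q.1 = v then q.2 else q.1)
    (fun w => if v < w then (v, w) else (w, v)) ?_ ?_ ?_ ?_
  · intro q hq
    simp only [Finset.mem_coe, funkyPairs, Finset.mem_filter, Finset.mem_univ, true_and] at hq ⊢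
    obtain ⟨⟨hlt, hf⟩, hor⟩ := hq
    by_cases h1 : q.1 = v
    · rw [if_pos h1]; rw [h1] at hf; exact hf
    · rw [if_neg h1]
      rcases hor with h | h
      · exact absurd h h1
      · rw [h] at hf; exact funky_symm hf
  · intro w hw
    simp only [Finset.mem_coe, funkyPairs, Finset.mem_filter, Finset.mem_univ, true_and] at hw ⊢
    have hne : v ≠ w := funky_ne hw
    by_cases hlt : v < w
    · rw [if_pos hlt]; exact ⟨⟨hlt, hw⟩, Or.inl rfl⟩
    · rw [if_neg hlt]
      have : w < v := lt_of_le_of_ne (not_lt.mp hlt) (fun h => hne h.symm)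
      exact ⟨⟨this, funky_symm hw⟩, Or.inr rfl⟩
  · intro q hq
    simp only [Finset.mem_coe, funkyPairs, Finset.mem_filter, Finset.mem_univ, true_and] at hq
    obtain ⟨⟨hlt, hf⟩, hor⟩ := hq
    dsimp only
    by_cases h1 : q.1 = v
    · rw [if_pos h1, if_pos (h1 ▸ hlt)]
      exact Prod.ext h1.symm rfl
    · rw [if_neg h1]
      rcases hor with h | h
      · exact absurd h h1
      · rw [if_neg (by rw [← h]; exact fun hc => absurd (lt_trans hlt hc) (lt_irrefl _))]
        exact Prod.ext rfl h.symm
  · intro w hw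
    simp only [Finset.mem_coe, Finset.mem_filter, Finset.mem_univ, true_and] at hw
    have hne : v ≠ w := funky_ne hw
    dsimp only
    by_cases hlt : v < w
    · rw [if_pos hlt, if_pos rfl]
    · rw [if_neg hlt, if_neg (fun h : w = v => hne h.symm)]

lemma Dord_card_eq :
    ((Dord G P).card : ℝ) + (∑ p ∈ funkyPairs G P,
        ((fdeg G P p.1 : ℝ) + (fdeg G P p.2 : ℝ) - 2)) =
      ((funkyPairs G P).card : ℝ) * ((funkyPairs G P).card : ℝ) -
        ((funkyPairs G P).card : ℝ) := by
  classical
  set N := funkyPairs G P with hN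
  have hsum : (Dord G P).card = ∑ p ∈ N, (N.filter (fun q => disjPair p q)).card := by
    unfold Dord
    rw [Finset.card_filter, Finset.sum_product]
    refine Finset.sum_congr rfl ?_
    intro p _
    rw [Finset.card_filter]
  have hper : ∀ p ∈ N, ((N.filter (fun q => disjPair p q)).card : ℝ)
      = (N.card : ℝ) - (fdeg G P p.1 : ℝ) - (fdeg G P p.2 : ℝ) + 1 := by
    intro p hp
    obtain ⟨hplt, hpf⟩ : p.1 < p.2 ∧ Funky G P p.1 p.2 := by
      simpa [hN, funkyPairs] using hp
    have hsplit := Finset.card_filter_add_card_filter_not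
      (s := N) (p := fun q => disjPair p q)
    have hneg : N.filter (fun q => ¬ disjPair p q)
        = (N.filter (fun q => q.1 = p.1 ∨ q.2 = p.1)) ∪ (N.filter (fun q => q.1 = p.2 ∨ q.2 = p.2)) := by
      ext q
      simp only [Finset.mem_filter, Finset.mem_union]; simp only [disjPair]
      constructor
      · rintro ⟨hq, hnd⟩
        push_neg at hnd
        by_cases h1 : p.1 = q.1
        · exact Or.inl ⟨hq, Or.inl h1.symm⟩
        by_cases h2 : p.1 = q.2
        · exact Or.inl ⟨hq, Or.inr h2.symm⟩
        by_cases h3 : p.2 = q.1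
        · exact Or.inr ⟨hq, Or.inl h3.symm⟩
        · exact Or.inr ⟨hq, Or.inr (hnd h1 h2 h3).symm⟩
      · rintro (⟨hq, h⟩ | ⟨hq, h⟩) <;>
          exact ⟨hq, by rcases h with h | h <;> simp [disjPair, h.symm]⟩
    have hinter : (N.filter (fun q => q.1 = p.1 ∨ q.2 = p.1)) ∩ (N.filter (fun q => q.1 = p.2 ∨ q.2 = p.2)) = {p} := by
      ext q
      simp only [Finset.mem_inter, Finset.mem_filter, Finset.mem_singleton]
      constructor
      · rintro ⟨⟨hq1, h1⟩, ⟨hq2, h2⟩⟩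
        obtain ⟨hqlt, _⟩ : q.1 < q.2 ∧ Funky G P q.1 q.2 := by simpa [hN, funkyPairs] using hq1
        rcases h1 with h1 | h1 <;> rcases h2 with h2 | h2
        · exact absurd (h1.symm.trans h2) (ne_of_lt hplt)
        · exact Prod.ext h1 h2
        · exfalso; rw [h1, h2] at hqlt; exact absurd hplt (asymm hqlt)
        · exact absurd (h2.symm.trans h1).symm (ne_of_lt hplt)
      · rintro rfl
        exact ⟨⟨hp, Or.inl rfl⟩, ⟨hp, Or.inr rfl⟩⟩
    have hucard := Finset.card_union_add_card_inter
      (N.filter (fun q => q.1 = p.1 ∨ q.2 = p.1)) (N.filter (fun q => q.1 = p.2 ∨ q.2 = p.2))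
    rw [hinter, Finset.card_singleton, fdeg_eq, fdeg_eq] at hucard
    rw [hneg] at hsplit
    have h1 : ((N.filter (fun q => disjPair p q)).card : ℝ)
        + (((N.filter (fun q => q.1 = p.1 ∨ q.2 = p.1)) ∪ (N.filter (fun q => q.1 = p.2 ∨ q.2 = p.2))).card : ℝ)
        = (N.card : ℝ) := by exact_mod_cast congrArg (Nat.cast : ℕ → ℝ) hsplit
    have h2 : (((N.filter (fun q => q.1 = p.1 ∨ q.2 = p.1)) ∪ (N.filter (fun q => q.1 = p.2 ∨ q.2 = p.2))).card : ℝ) + 1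
        = (fdeg G P p.1 : ℝ) + (fdeg G P p.2 : ℝ) := by exact_mod_cast congrArg (Nat.cast : ℕ → ℝ) hucard
    linarith
  have : ((Dord G P).card : ℝ) = ∑ p ∈ N, ((N.filter (fun q => disjPair p q)).card : ℝ) := by
    rw [hsum]; push_cast; ring
  rw [this, Finset.sum_congr rfl hper, ← Finset.sum_add_distrib]
  have hcomb : ∀ p ∈ N, (((N.card : ℝ) - fdeg G P p.1 - fdeg G P p.2 + 1)
      + ((fdeg G P p.1 : ℝ) + (fdeg G P p.2 : ℝ) - 2)) = (N.card : ℝ) - 1 := by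
    intros; ring
  rw [Finset.sum_congr rfl hcomb, Finset.sum_const, nsmul_eq_mul]
  ring

def SPred (s : Finset (Fin n)) : Prop := s.card = 5 ∧
    Nonempty (G.induce (s : Set (Fin n)) ≃g C5) ∧
    ∃ a b c d : Fin n, a ∈ s ∧ b ∈ s ∧ c ∈ s ∧ d ∈ s ∧
      a ≠ c ∧ a ≠ d ∧ b ≠ c ∧ b ≠ d ∧ Funky G P a b ∧ Funky G P c d

noncomputable def SFam : Finset (Finset (Fin n)) := Finset.univ.filter (fun s => SPred G P s)

def inC (pq : (Fin n × Fin n) × (Fin n × Fin n)) (s : Finset (Fin n)) : Prop :=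
  pq.1.1 ∈ s ∧ pq.1.2 ∈ s ∧ pq.2.1 ∈ s ∧ pq.2.2 ∈ s

noncomputable def Wd (s : Finset (Fin n)) : ℕ :=
  ((Dord G P).filter (fun pq => inC pq s)).card

noncomputable def Xc (t : Fin 5) : ℕ := (Finset.univ.filter fun v => P v = t).card

def mkp (u v : Fin n) : Fin n × Fin n := if u < v then (u, v) else (v, u)

lemma mkp_cases (u v : Fin n) : mkp u v = (u, v) ∨ mkp u v = (v, u) := by
  unfold mkp; split_ifs
  · exact Or.inl rfl
  · exact Or.inr rfl

lemma mkp_mem {u v : Fin n} (hf : Funky G P u v) : mkp u v ∈ funkyPairs G P := by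
  have hne := funky_ne hf
  unfold mkp
  split_ifs with h
  · simp only [funkyPairs, Finset.mem_filter, Finset.mem_univ, true_and]
    exact ⟨h, hf⟩
  · simp only [funkyPairs, Finset.mem_filter, Finset.mem_univ, true_and]
    exact ⟨lt_of_le_of_ne (not_lt.mp h) (fun hc => hne hc.symm), funky_symm hf⟩

lemma card_four {α : Type*} [DecidableEq α] {w x y z : α} (h1 : w ≠ x) (h2 : w ≠ y)
    (h3 : w ≠ z) (h4 : x ≠ y) (h5 : x ≠ z) (h6 : y ≠ z) :
    ({w, x, y, z} : Finset α).card = 4 := by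
  rw [Finset.card_insert_of_notMem (by simp [h1, h2, h3]),
    Finset.card_insert_of_notMem (by simp [h4, h5]),
    Finset.card_insert_of_notMem (by simp [h6]), Finset.card_singleton]

lemma disjPair_symm {p q : Fin n × Fin n} (h : disjPair p q) : disjPair q p := by
  obtain ⟨h1, h2, h3, h4⟩ := h
  exact ⟨h1.symm, h3.symm, h2.symm, h4.symm⟩

lemma W_pos {s : Finset (Fin n)} (hs : s ∈ SFam G P) : 1 ≤ Wd G P s := by
  obtain ⟨h5, hiso, a, b, c, d, ha, hb, hc, hd, hac, had, hbc, hbd, hab, hcd⟩ :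
      SPred G P s := by simpa [SFam] using hs
  refine Finset.card_pos.mpr ⟨(mkp a b, mkp c d), ?_⟩
  rcases mkp_cases a b with h | h <;> rcases mkp_cases c d with h' | h' <;> rw [h, h'] <;>
    refine Finset.mem_filter.mpr ⟨Finset.mem_filter.mpr ⟨Finset.mem_product.mpr
      ⟨h ▸ mkp_mem G P hab, h' ▸ mkp_mem G P hcd⟩, ?_⟩, ?_⟩ <;>
    simp [disjPair, inC, ha, hb, hc, hd, hac, had, hbc, hbd]

lemma W4_helper {s : Finset (Fin n)} {p q r : Fin n × Fin n}
    (hp : (p, q) ∈ (Dord G P).filter (fun pq => inC pq s))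
    (hq : (q, p) ∈ (Dord G P).filter (fun pq => inC pq s))
    (hr1 : (r, q) ∈ (Dord G P).filter (fun pq => inC pq s))
    (hr2 : (q, r) ∈ (Dord G P).filter (fun pq => inC pq s))
    (hpq : p ≠ q) (hrp : r ≠ p) (hrq : r ≠ q) : 4 ≤ Wd G P s := by
  have hsub : ({(p, q), (q, p), (r, q), (q, r)} : Finset ((Fin n × Fin n) × (Fin n × Fin n)))
      ⊆ (Dord G P).filter (fun pq => inC pq s) := by
    intro z hz
    simp only [Finset.mem_insert, Finset.mem_singleton] at hz
    rcases hz with rfl | rfl | rfl | rfl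
    exacts [hp, hq, hr1, hr2]
  have hc4 : ({(p, q), (q, p), (r, q), (q, r)} : Finset ((Fin n × Fin n) × (Fin n × Fin n))).card = 4 := by
    refine card_four ?_ ?_ ?_ ?_ ?_ ?_
    · exact fun h => hpq (congrArg Prod.fst h)
    · exact fun h => hrp (congrArg Prod.fst h).symm
    · exact fun h => hpq (congrArg Prod.fst h)
    · exact fun h => hrq (congrArg Prod.fst h).symm
    · exact fun h => hrp (congrArg Prod.snd h).symm
    · exact fun h => hrq (congrArg Prod.fst h)
  calc 4 = ({(p, q), (q, p), (r, q), (q, r)} : Finset ((Fin n × Fin n) × (Fin n × Fin n))).card := hc4.symm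
    _ ≤ _ := Finset.card_le_card hsub

def ATp (Fs : Finset (Fin n)) (v : Fin n) : Prop :=
  ((Fs.filter (fun w => G.Adj v w)).card = 1)

lemma per_pq (a b c d : Fin n) (hpq : ((a, b), (c, d)) ∈ Dord G P) (C : ℝ)
    (hC : ∀ T : Finset (Fin 5), T.card ≤ 2 → (∑ t ∈ T, (Xc P t : ℝ)) ≤ C)
    (h0 : 0 ≤ (n : ℝ) - 4 + C) :
    ∑ s ∈ (SFam G P).filter (fun s => inC ((a, b), (c, d)) s), ((Wd G P s : ℝ))⁻¹
      ≤ ((n : ℝ) - 4 + C) / 4 := by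
  classical
  obtain ⟨hprod, hac, had, hbc, hbd⟩ :
      (((a, b), (c, d)).1 ∈ funkyPairs G P ∧ ((a, b), (c, d)).2 ∈ funkyPairs G P)
        ∧ (a ≠ c) ∧ (a ≠ d) ∧ (b ≠ c) ∧ (b ≠ d) := by
    have := hpq
    simp only [Dord, Finset.mem_filter, Finset.mem_product] at this; simp only [disjPair] at this
    exact ⟨⟨this.1.1, this.1.2⟩, this.2.1, this.2.2.1, this.2.2.2.1, this.2.2.2.2⟩
  obtain ⟨habP, hcdP⟩ := hprod
  obtain ⟨haltb, habF⟩ : a < b ∧ Funky G P a b := by simpa [funkyPairs] using habP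
  obtain ⟨hcltd, hcdF⟩ : c < d ∧ Funky G P c d := by simpa [funkyPairs] using hcdP
  have hab' : a ≠ b := ne_of_lt haltb
  have hcd' : c ≠ d := ne_of_lt hcltd
  set Fs : Finset (Fin n) := ({a, b, c, d} : Finset (Fin n)) with hFs
  have haF : a ∈ Fs := by rw [hFs]; simp
  have hbF : b ∈ Fs := by rw [hFs]; simp
  have hcF : c ∈ Fs := by rw [hFs]; simp
  have hdF : d ∈ Fs := by rw [hFs]; simp
  have hF4 : Fs.card = 4 := by rw [hFs]; exact card_four hab' hac had hbc hbd hcd'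
  set Es : Finset (Fin n) :=
    Finset.univ.filter (fun e => e ∉ Fs ∧ SPred G P (insert e Fs)) with hEs
  have hEsmem : ∀ e, e ∈ Es ↔ (e ∉ Fs ∧ SPred G P (insert e Fs)) := by
    intro e; rw [hEs]; simp
  -- step 1 : reindex the sum by the fifth vertex
  have hstep1 : ∑ s ∈ (SFam G P).filter (fun s => inC ((a, b), (c, d)) s), ((Wd G P s : ℝ))⁻¹
      = ∑ e ∈ Es, ((Wd G P (insert e Fs) : ℝ))⁻¹ := by
    refine (Finset.sum_bij (fun e _ => insert e Fs) ?_ ?_ ?_ ?_).symm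
    · intro e he
      obtain ⟨heF, hsp⟩ := (hEsmem e).mp he
      refine Finset.mem_filter.mpr ⟨Finset.mem_filter.mpr ⟨Finset.mem_univ _, hsp⟩, ?_⟩
      exact ⟨Finset.mem_insert_of_mem haF, Finset.mem_insert_of_mem hbF,
        Finset.mem_insert_of_mem hcF, Finset.mem_insert_of_mem hdF⟩
    · intro e he e' he' h
      obtain ⟨heF, _⟩ := (hEsmem e).mp he
      obtain ⟨heF', _⟩ := (hEsmem e').mp he'
      have h2 : insert e Fs = insert e' Fs := h
      have : e ∈ insert e' Fs := h2 ▸ Finset.mem_insert_self e Fs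
      rcases Finset.mem_insert.mp this with h' | h'
      · exact h'
      · exact absurd h' heF
    · intro s hs
      obtain ⟨hsS, hinC⟩ := Finset.mem_filter.mp hs
      have hsp : SPred G P s := (Finset.mem_filter.mp hsS).2
      have hsub : Fs ⊆ s := by
        rw [hFs]
        intro x hx
        simp only [Finset.mem_insert, Finset.mem_singleton] at hx
        rcases hx with rfl | rfl | rfl | rfl
        exacts [hinC.1, hinC.2.1, hinC.2.2.1, hinC.2.2.2]
      have hcard1 : (s \ Fs).card = 1 := by
        rw [Finset.card_sdiff_of_subset hsub, hsp.1, hF4]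
      obtain ⟨e, hesd⟩ := Finset.card_eq_one.mp hcard1
      have he1 : e ∈ s \ Fs := hesd ▸ Finset.mem_singleton_self e
      have heFs : e ∉ Fs := (Finset.mem_sdiff.mp he1).2
      have hs_eq : insert e Fs = s := by
        have h1 : Fs ∪ (s \ Fs) = s := Finset.union_sdiff_of_subset hsub
        rw [← h1, hesd]
        ext x
        simp only [Finset.mem_insert, Finset.mem_union, Finset.mem_singleton]
        tauto
      refine ⟨e, (hEsmem e).mpr ⟨heFs, hs_eq ▸ hsp⟩, hs_eq⟩
    · intro e _; rfl
  rw [hstep1]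
  -- the determined adjacency predicate and safe parts
  set safeT : Finset (Fin 5) := Finset.univ.filter (fun t =>
      ¬ pattP (ATp G Fs a) t (P a) ∧ ¬ pattP (ATp G Fs b) t (P b) ∧
      ¬ pattP (ATp G Fs c) t (P c) ∧ ¬ pattP (ATp G Fs d) t (P d)) with hsafeT
  have hstruct : ∀ e ∈ Es, ((Fs.filter (fun w => G.Adj e w)).card = 2 ∧
      ∀ v ∈ Fs, (G.Adj e v ↔ ATp G Fs v)) := by
    intro e he
    obtain ⟨heF, h5, ⟨φ⟩, _⟩ := (hEsmem e).mp he
    have herase : (insert e Fs).erase e = Fs := Finset.erase_insert heF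
    have := c5_structure φ (Finset.mem_insert_self e Fs)
    rw [herase] at this
    exact this
  have hDcd : ((c, d), (a, b)) ∈ Dord G P := by
    simp only [Dord, Finset.mem_filter, Finset.mem_product]
    exact ⟨⟨hcdP, habP⟩, disjPair_symm ⟨hac, had, hbc, hbd⟩⟩
  have hm1 : ∀ e, ((a, b), (c, d)) ∈ (Dord G P).filter (fun pq => inC pq (insert e Fs)) := by
    intro e
    exact Finset.mem_filter.mpr ⟨hpq, Finset.mem_insert_of_mem haF,
      Finset.mem_insert_of_mem hbF, Finset.mem_insert_of_mem hcF, Finset.mem_insert_of_mem hdF⟩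
  have hm2 : ∀ e, ((c, d), (a, b)) ∈ (Dord G P).filter (fun pq => inC pq (insert e Fs)) := by
    intro e
    exact Finset.mem_filter.mpr ⟨hDcd, Finset.mem_insert_of_mem hcF,
      Finset.mem_insert_of_mem hdF, Finset.mem_insert_of_mem haF, Finset.mem_insert_of_mem hbF⟩
  have hW2 : ∀ e ∈ Es, 2 ≤ Wd G P (insert e Fs) := by
    intro e _
    have hsub : ({((a, b), (c, d)), ((c, d), (a, b))} :
        Finset ((Fin n × Fin n) × (Fin n × Fin n)))
        ⊆ (Dord G P).filter (fun pq => inC pq (insert e Fs)) := by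
      intro z hz
      simp only [Finset.mem_insert, Finset.mem_singleton] at hz
      rcases hz with rfl | rfl
      exacts [hm1 e, hm2 e]
    have h2 : ({((a, b), (c, d)), ((c, d), (a, b))} :
        Finset ((Fin n × Fin n) × (Fin n × Fin n))).card = 2 := by
      rw [Finset.card_insert_of_notMem, Finset.card_singleton]
      simp only [Finset.mem_singleton]
      exact fun h => hac (congrArg (fun z => z.1.1) h)
    calc 2 = _ := h2.symm
      _ ≤ _ := Finset.card_le_card hsub
  -- unsafe fifth vertices give two extra decompositions
  have hW4 : ∀ e ∈ Es, P e ∉ safeT → 4 ≤ Wd G P (insert e Fs) := by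
    intro e he hPe
    obtain ⟨heF, _⟩ := (hEsmem e).mp he
    have hea : e ≠ a := fun h => heF (h ▸ haF)
    have heb : e ≠ b := fun h => heF (h ▸ hbF)
    have hec : e ≠ c := fun h => heF (h ▸ hcF)
    have hed : e ≠ d := fun h => heF (h ▸ hdF)
    have hdet := (hstruct e he).2
    -- extract the funky partner
    have hvex : ∃ v, ((v = a ∨ v = b) ∨ (v = c ∨ v = d)) ∧ Funky G P e v := by
      rw [hsafeT] at hPe
      simp only [Finset.mem_filter, Finset.mem_univ, true_and, not_and_or, not_not] at hPe
      have hget : ∀ v, v ∈ Fs → pattP (ATp G Fs v) (P e) (P v) → Funky G P e v := by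
        intro v hvF hpat
        exact (funky_iff G P e v).mpr ((pattP_congr (hdet v hvF) _ _).mpr hpat)
      rcases hPe with h | h | h | h
      · exact ⟨a, Or.inl (Or.inl rfl), hget a haF h⟩
      · exact ⟨b, Or.inl (Or.inr rfl), hget b hbF h⟩
      · exact ⟨c, Or.inr (Or.inl rfl), hget c hcF h⟩
      · exact ⟨d, Or.inr (Or.inr rfl), hget d hdF h⟩
    obtain ⟨v, hvor, hevF⟩ := hvex
    have heIns : e ∈ insert e Fs := Finset.mem_insert_self e Fs
    have haI : a ∈ insert e Fs := Finset.mem_insert_of_mem haF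
    have hbI : b ∈ insert e Fs := Finset.mem_insert_of_mem hbF
    have hcI : c ∈ insert e Fs := Finset.mem_insert_of_mem hcF
    have hdI : d ∈ insert e Fs := Finset.mem_insert_of_mem hdF
    have hrP : mkp e v ∈ funkyPairs G P := mkp_mem G P hevF
    have hmk : ∀ (u w : Fin n × Fin n), u ∈ funkyPairs G P → w ∈ funkyPairs G P →
        disjPair u w → inC (u, w) (insert e Fs) →
        (u, w) ∈ (Dord G P).filter (fun pq => inC pq (insert e Fs)) := by
      intro u w hu hw hdj hic
      exact Finset.mem_filter.mpr ⟨by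
        simp only [Dord, Finset.mem_filter, Finset.mem_product]
        exact ⟨⟨hu, hw⟩, hdj⟩, hic⟩
    rcases hvor with (hv | hv) | (hv | hv) <;> rw [hv] at hevF hrP
    · -- v = a
      rcases mkp_cases e a with hr | hr <;> rw [hr] at hrP
      · have hr1 := hmk (e, a) (c, d) hrP hcdP ⟨hec, hed, hac, had⟩ ⟨heIns, haI, hcI, hdI⟩
        have hr2 := hmk (c, d) (e, a) hcdP hrP ⟨hec.symm, hac.symm, hed.symm, had.symm⟩
          ⟨hcI, hdI, heIns, haI⟩
        exact W4_helper G P (hm1 e) (hm2 e) hr1 hr2 (fun h => hac (congrArg Prod.fst h))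
          (fun h => hea (congrArg Prod.fst h)) (fun h => hec (congrArg Prod.fst h))
      · have hr1 := hmk (a, e) (c, d) hrP hcdP ⟨hac, had, hec, hed⟩ ⟨haI, heIns, hcI, hdI⟩
        have hr2 := hmk (c, d) (a, e) hcdP hrP ⟨hac.symm, hec.symm, had.symm, hed.symm⟩
          ⟨hcI, hdI, haI, heIns⟩
        exact W4_helper G P (hm1 e) (hm2 e) hr1 hr2 (fun h => hac (congrArg Prod.fst h))
          (fun h => heb (congrArg Prod.snd h)) (fun h => hac (congrArg Prod.fst h))
    · -- v = b
      rcases mkp_cases e b with hr | hr <;> rw [hr] at hrP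
      · have hr1 := hmk (e, b) (c, d) hrP hcdP ⟨hec, hed, hbc, hbd⟩ ⟨heIns, hbI, hcI, hdI⟩
        have hr2 := hmk (c, d) (e, b) hcdP hrP ⟨hec.symm, hbc.symm, hed.symm, hbd.symm⟩
          ⟨hcI, hdI, heIns, hbI⟩
        exact W4_helper G P (hm1 e) (hm2 e) hr1 hr2 (fun h => hac (congrArg Prod.fst h))
          (fun h => hea (congrArg Prod.fst h)) (fun h => hec (congrArg Prod.fst h))
      · have hr1 := hmk (b, e) (c, d) hrP hcdP ⟨hbc, hbd, hec, hed⟩ ⟨hbI, heIns, hcI, hdI⟩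
        have hr2 := hmk (c, d) (b, e) hcdP hrP ⟨hbc.symm, hec.symm, hbd.symm, hed.symm⟩
          ⟨hcI, hdI, hbI, heIns⟩
        exact W4_helper G P (hm1 e) (hm2 e) hr1 hr2 (fun h => hac (congrArg Prod.fst h))
          (fun h => hab'.symm (congrArg Prod.fst h)) (fun h => hbc (congrArg Prod.fst h))
    · -- v = c
      rcases mkp_cases e c with hr | hr <;> rw [hr] at hrP
      · have hr1 := hmk (e, c) (a, b) hrP habP ⟨hea, heb, hac.symm, hbc.symm⟩
          ⟨heIns, hcI, haI, hbI⟩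
        have hr2 := hmk (a, b) (e, c) habP hrP ⟨hea.symm, hac, heb.symm, hbc⟩
          ⟨haI, hbI, heIns, hcI⟩
        exact W4_helper G P (hm2 e) (hm1 e) hr1 hr2 (fun h => hac.symm (congrArg Prod.fst h))
          (fun h => hec (congrArg Prod.fst h)) (fun h => hea (congrArg Prod.fst h))
      · have hr1 := hmk (c, e) (a, b) hrP habP ⟨hac.symm, hbc.symm, hea, heb⟩
          ⟨hcI, heIns, haI, hbI⟩
        have hr2 := hmk (a, b) (c, e) habP hrP ⟨hac, hea.symm, hbc, heb.symm⟩
          ⟨haI, hbI, hcI, heIns⟩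
        exact W4_helper G P (hm2 e) (hm1 e) hr1 hr2 (fun h => hac.symm (congrArg Prod.fst h))
          (fun h => hed (congrArg Prod.snd h)) (fun h => hac.symm (congrArg Prod.fst h))
    · -- v = d
      rcases mkp_cases e d with hr | hr <;> rw [hr] at hrP
      · have hr1 := hmk (e, d) (a, b) hrP habP ⟨hea, heb, had.symm, hbd.symm⟩
          ⟨heIns, hdI, haI, hbI⟩
        have hr2 := hmk (a, b) (e, d) habP hrP ⟨hea.symm, had, heb.symm, hbd⟩
          ⟨haI, hbI, heIns, hdI⟩
        exact W4_helper G P (hm2 e) (hm1 e) hr1 hr2 (fun h => hac.symm (congrArg Prod.fst h))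
          (fun h => hec (congrArg Prod.fst h)) (fun h => hea (congrArg Prod.fst h))
      · have hr1 := hmk (d, e) (a, b) hrP habP ⟨had.symm, hbd.symm, hea, heb⟩
          ⟨hdI, heIns, haI, hbI⟩
        have hr2 := hmk (a, b) (d, e) habP hrP ⟨had, hea.symm, hbd, heb.symm⟩
          ⟨haI, hbI, hdI, heIns⟩
        exact W4_helper G P (hm2 e) (hm1 e) hr1 hr2 (fun h => hac.symm (congrArg Prod.fst h))
          (fun h => hcd'.symm (congrArg Prod.fst h)) (fun h => had.symm (congrArg Prod.fst h))
  -- bound on the number of safe parts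
  have hsafe2 : Es.Nonempty → safeT.card ≤ 2 := by
    rintro ⟨e0, he0⟩
    obtain ⟨hdeg2, hdet⟩ := hstruct e0 he0
    have hfe : Fs.filter (fun v => G.Adj e0 v) = Fs.filter (fun v => ATp G Fs v) :=
      Finset.filter_congr (fun v hv => by rw [hdet v hv])
    have hATcard : (Fs.filter (fun v => ATp G Fs v)).card = 2 := by rw [← hfe]; exact hdeg2
    have hsum4 := hATcard
    rw [Finset.card_filter, hFs, Finset.sum_insert (by simp [hab', hac, had]),
      Finset.sum_insert (by simp [hbc, hbd]), Finset.sum_insert (by simp [hcd']),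
      Finset.sum_singleton] at hsum4
    have hbridge : ∀ (Apred : Prop), ∃ bb : Bool, (bb.toNat = if Apred then 1 else 0) ∧
        ∀ t q, (pattB bb t q ↔ pattP Apred t q) := by
      intro Apred
      by_cases h : Apred
      · exact ⟨true, by simp [h], fun t q => pattP_congr (by simp [h]) t q⟩
      · exact ⟨false, by simp [h], fun t q => pattP_congr (by simp [h]) t q⟩
    obtain ⟨b1, hb11, hb12⟩ := hbridge (ATp G Fs a)
    obtain ⟨b2, hb21, hb22⟩ := hbridge (ATp G Fs b)
    obtain ⟨b3, hb31, hb32⟩ := hbridge (ATp G Fs c)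
    obtain ⟨b4, hb41, hb42⟩ := hbridge (ATp G Fs d)
    rw [← hFs] at hsum4
    have htn : b1.toNat + b2.toNat + b3.toNat + b4.toNat = 2 := by
      by_cases h1 : ATp G Fs a <;> by_cases h2 : ATp G Fs b <;>
        by_cases h3 : ATp G Fs c <;> by_cases h4 : ATp G Fs d <;>
        simp only [h1, h2, h3, h4, if_true, if_false, not_false_iff] at hsum4 hb11 hb21 hb31 hb41 <;>
        omega
    have hfin := finClaim b1 b2 b3 b4 (P a) (P b) (P c) (P d) htn
    have heq : safeT = Finset.univ.filter (fun t =>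
        ¬ pattB b1 t (P a) ∧ ¬ pattB b2 t (P b) ∧ ¬ pattB b3 t (P c) ∧ ¬ pattB b4 t (P d)) := by
      rw [hsafeT]
      apply Finset.filter_congr
      intro t _
      rw [hb12 t (P a), hb22 t (P b), hb32 t (P c), hb42 t (P d)]
    rw [heq]
    convert hfin using 2
  -- final assembly
  rcases Finset.eq_empty_or_nonempty Es with hE | hE
  · rw [hE, Finset.sum_empty]; linarith
  have hsT : safeT.card ≤ 2 := hsafe2 hE
  have hterm : ∀ e ∈ Es, ((Wd G P (insert e Fs) : ℝ))⁻¹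
      ≤ (if P e ∈ safeT then (1/2 : ℝ) else (1/4 : ℝ)) := by
    intro e he
    by_cases hPe : P e ∈ safeT
    · rw [if_pos hPe]
      have h2 : (2 : ℝ) ≤ (Wd G P (insert e Fs) : ℝ) := by exact_mod_cast hW2 e he
      rw [show (1/2 : ℝ) = (2 : ℝ)⁻¹ by norm_num]
      exact inv_anti₀ (by norm_num) h2
    · rw [if_neg hPe]
      have h4 : (4 : ℝ) ≤ (Wd G P (insert e Fs) : ℝ) := by exact_mod_cast hW4 e he hPe
      rw [show (1/4 : ℝ) = (4 : ℝ)⁻¹ by norm_num]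
      exact inv_anti₀ (by norm_num) h4
  have h1 : ∑ e ∈ Es, ((Wd G P (insert e Fs) : ℝ))⁻¹
      ≤ ∑ e ∈ Es, (if P e ∈ safeT then (1/2 : ℝ) else (1/4 : ℝ)) := Finset.sum_le_sum hterm
  have h2 : ∑ e ∈ Es, (if P e ∈ safeT then (1/2 : ℝ) else (1/4 : ℝ))
      = ∑ t : Fin 5, ∑ e ∈ Es.filter (fun e => P e = t),
          (if P e ∈ safeT then (1/2 : ℝ) else (1/4 : ℝ)) :=
    (Finset.sum_fiberwise Es P _).symm
  have h3 : ∀ t : Fin 5, ∑ e ∈ Es.filter (fun e => P e = t),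
      (if P e ∈ safeT then (1/2 : ℝ) else (1/4 : ℝ))
      = ((Es.filter (fun e => P e = t)).card : ℝ) * (if t ∈ safeT then (1/2 : ℝ) else (1/4 : ℝ)) := by
    intro t
    rw [Finset.sum_congr rfl (fun e he => by rw [(Finset.mem_filter.mp he).2]),
      Finset.sum_const, nsmul_eq_mul]
  have hcardle : ∀ t : Fin 5, ((Es.filter (fun e => P e = t)).card : ℝ)
      ≤ (Xc P t : ℝ) - ((Fs.filter (fun v => P v = t)).card : ℝ) := by
    intro t
    have hsub : Es.filter (fun e => P e = t) ⊆ (Finset.univ.filter (fun v => P v = t)) \ Fs := by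
      intro e he
      obtain ⟨heE, hPt⟩ := Finset.mem_filter.mp he
      obtain ⟨heF, _⟩ := (hEsmem e).mp heE
      exact Finset.mem_sdiff.mpr ⟨Finset.mem_filter.mpr ⟨Finset.mem_univ _, hPt⟩, heF⟩
    have h4 := Finset.card_le_card hsub
    have h5 := Finset.card_sdiff_add_card_inter (Finset.univ.filter (fun v => P v = t)) Fs
    have h6 : (Finset.univ.filter (fun v => P v = t)) ∩ Fs = Fs.filter (fun v => P v = t) := by
      ext v
      simp only [Finset.mem_inter, Finset.mem_filter, Finset.mem_univ, true_and]
      exact and_comm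
    rw [h6] at h5
    have h7 : Xc P t = (Finset.univ.filter (fun v => P v = t)).card := rfl
    have h8 : (Es.filter (fun e => P e = t)).card
        ≤ ((Finset.univ.filter (fun v => P v = t)) \ Fs).card := h4
    have h9 : ((Finset.univ.filter (fun v => P v = t)) \ Fs).card
        + (Fs.filter (fun v => P v = t)).card = Xc P t := by rw [h7]; exact h5
    push_cast [← h9]
    linarith [(Nat.cast_le (α := ℝ)).mpr h8]
  have hwgt_nonneg : ∀ t : Fin 5, (0:ℝ) ≤ (if t ∈ safeT then (1/2 : ℝ) else (1/4 : ℝ)) := by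
    intro t; split_ifs <;> norm_num
  have hXF_bound : ∀ t : Fin 5, ((Es.filter (fun e => P e = t)).card : ℝ)
        * (if t ∈ safeT then (1/2 : ℝ) else (1/4 : ℝ))
      ≤ (1/4) * ((Xc P t : ℝ) - ((Fs.filter (fun v => P v = t)).card : ℝ))
        + (1/4) * (if t ∈ safeT then (Xc P t : ℝ) else 0) := by
    intro t
    have hc := hcardle t
    have hF0 : (0:ℝ) ≤ ((Fs.filter (fun v => P v = t)).card : ℝ) := Nat.cast_nonneg _
    have hcn : (0:ℝ) ≤ ((Es.filter (fun e => P e = t)).card : ℝ) := Nat.cast_nonneg _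
    by_cases ht : t ∈ safeT
    · rw [if_pos ht, if_pos ht]
      nlinarith
    · rw [if_neg ht, if_neg ht]
      nlinarith
  have hXsum : ∑ t : Fin 5, (Xc P t : ℝ) = (n : ℝ) := by
    have h := Finset.card_eq_sum_card_fiberwise
      (f := P) (s := (Finset.univ : Finset (Fin n))) (t := (Finset.univ : Finset (Fin 5)))
      (fun x _ => Finset.mem_univ _)
    rw [Finset.card_univ, Fintype.card_fin] at h
    have : ∑ t : Fin 5, Xc P t = n := h.symm
    exact_mod_cast this
  have hFsum : ∑ t : Fin 5, ((Fs.filter (fun v => P v = t)).card : ℝ) = 4 := by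
    have h := Finset.card_eq_sum_card_fiberwise
      (f := P) (s := Fs) (t := (Finset.univ : Finset (Fin 5)))
      (fun x _ => Finset.mem_univ _)
    rw [hF4] at h
    exact_mod_cast h.symm
  have hsafesum : ∑ t ∈ safeT, (Xc P t : ℝ) ≤ C := hC safeT hsT
  have hite_sum : ∑ t : Fin 5, (if t ∈ safeT then (Xc P t : ℝ) else 0)
      = ∑ t ∈ safeT, (Xc P t : ℝ) := by
    rw [← Finset.sum_filter]
    congr 1
    rw [Finset.filter_mem_eq_inter, Finset.univ_inter]
  calc ∑ e ∈ Es, ((Wd G P (insert e Fs) : ℝ))⁻¹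
      ≤ ∑ e ∈ Es, (if P e ∈ safeT then (1/2 : ℝ) else (1/4 : ℝ)) := h1
    _ = ∑ t : Fin 5, ((Es.filter (fun e => P e = t)).card : ℝ)
        * (if t ∈ safeT then (1/2 : ℝ) else (1/4 : ℝ)) := by
        rw [h2]; exact Finset.sum_congr rfl (fun t _ => h3 t)
    _ ≤ ∑ t : Fin 5, ((1/4) * ((Xc P t : ℝ) - ((Fs.filter (fun v => P v = t)).card : ℝ))
        + (1/4) * (if t ∈ safeT then (Xc P t : ℝ) else 0)) :=
        Finset.sum_le_sum (fun t _ => hXF_bound t)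
    _ = (1/4) * ((n:ℝ) - 4) + (1/4) * (∑ t ∈ safeT, (Xc P t : ℝ)) := by
        rw [Finset.sum_add_distrib, ← Finset.mul_sum, ← Finset.mul_sum,
          Finset.sum_sub_distrib, hXsum, hFsum, hite_sum]
    _ ≤ ((n : ℝ) - 4 + C) / 4 := by linarith

lemma main_count (C : ℝ) (h0 : 0 ≤ (n : ℝ) - 4 + C)
    (hC : ∀ T : Finset (Fin 5), T.card ≤ 2 → (∑ t ∈ T, (Xc P t : ℝ)) ≤ C) :
    (((SFam G P).card : ℝ)) ≤ ((Dord G P).card : ℝ) * (((n : ℝ) - 4 + C) / 4) := by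
  classical
  have hws : ∀ s ∈ SFam G P, (1 : ℝ)
      = ∑ pq ∈ (Dord G P).filter (fun pq => inC pq s), ((Wd G P s : ℝ))⁻¹ := by
    intro s hs
    rw [Finset.sum_const, nsmul_eq_mul]
    have hW := W_pos G P hs
    have hne : (Wd G P s : ℝ) ≠ 0 := by
      have : (0:ℝ) < (Wd G P s : ℝ) := by exact_mod_cast hW
      linarith
    rw [show (((Dord G P).filter (fun pq => inC pq s)).card : ℝ) = (Wd G P s : ℝ) from rfl,
      mul_inv_cancel₀ hne]
  have h1 : ((SFam G P).card : ℝ)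
      = ∑ s ∈ SFam G P, ∑ pq ∈ (Dord G P).filter (fun pq => inC pq s), ((Wd G P s : ℝ))⁻¹ := by
    calc ((SFam G P).card : ℝ) = ∑ _s ∈ SFam G P, (1 : ℝ) := by
          rw [Finset.sum_const, nsmul_eq_mul, mul_one]
      _ = _ := Finset.sum_congr rfl hws
  have h2 : ∑ s ∈ SFam G P, ∑ pq ∈ (Dord G P).filter (fun pq => inC pq s), ((Wd G P s : ℝ))⁻¹
      = ∑ pq ∈ Dord G P, ∑ s ∈ (SFam G P).filter (fun s => inC pq s), ((Wd G P s : ℝ))⁻¹ := by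
    have ha : ∀ s ∈ SFam G P, ∑ pq ∈ (Dord G P).filter (fun pq => inC pq s), ((Wd G P s : ℝ))⁻¹
        = ∑ pq ∈ Dord G P, (if inC pq s then ((Wd G P s : ℝ))⁻¹ else 0) :=
      fun s _ => Finset.sum_filter _ _
    have hb : ∀ pq ∈ Dord G P, ∑ s ∈ (SFam G P).filter (fun s => inC pq s), ((Wd G P s : ℝ))⁻¹
        = ∑ s ∈ SFam G P, (if inC pq s then ((Wd G P s : ℝ))⁻¹ else 0) :=
      fun pq _ => Finset.sum_filter _ _
    rw [Finset.sum_congr rfl ha, Finset.sum_congr rfl hb, Finset.sum_comm]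
  have h3 : ∀ pq ∈ Dord G P,
      ∑ s ∈ (SFam G P).filter (fun s => inC pq s), ((Wd G P s : ℝ))⁻¹
        ≤ ((n : ℝ) - 4 + C) / 4 := by
    rintro ⟨⟨a, b⟩, ⟨c, d⟩⟩ hpq
    exact per_pq G P a b c d hpq C hC h0
  calc ((SFam G P).card : ℝ) = _ := h1
    _ = _ := h2
    _ ≤ ∑ _pq ∈ Dord G P, (((n : ℝ) - 4 + C) / 4) := Finset.sum_le_sum h3
    _ = ((Dord G P).card : ℝ) * (((n : ℝ) - 4 + C) / 4) := by
        rw [Finset.sum_const, nsmul_eq_mul]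

lemma Xc_total : ∑ t : Fin 5, (Xc P t : ℝ) = (n : ℝ) := by
  have h := Finset.card_eq_sum_card_fiberwise
    (f := P) (s := (Finset.univ : Finset (Fin n))) (t := (Finset.univ : Finset (Fin 5)))
    (fun x _ => Finset.mem_univ _)
  rw [Finset.card_univ, Fintype.card_fin] at h
  have h2 : ∑ t : Fin 5, Xc P t = n := h.symm
  exact_mod_cast h2

lemma funky_parts_ne {u v : Fin n} (h : Funky G P u v) : P u ≠ P v := by
  intro hc
  rcases h with ⟨_, h2⟩ | ⟨_, h2⟩ <;> rw [hc] at h2 <;>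
    simp [Set.mem_insert_iff] at h2

end Main

lemma pair_y_bound (y : Fin 5 → ℝ) (hmono : ∀ i j : Fin 5, i ≤ j → y j ≤ y i)
    (hnn : ∀ i, 0 ≤ y i) (T : Finset (Fin 5)) (hT : T.card ≤ 2) :
    ∑ i ∈ T, y i ≤ y 0 + y 1 := by
  have key : ∀ i j : Fin 5, i < j → y i + y j ≤ y 0 + y 1 := by
    intro i j hij
    have h1 : y i ≤ y 0 := hmono 0 i (Fin.zero_le i)
    have h2 : y j ≤ y 1 := by
      refine hmono 1 j ?_
      rw [Fin.le_def]
      have : (i : ℕ) < (j : ℕ) := hij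
      have h1v : ((1 : Fin 5) : ℕ) = 1 := rfl
      omega
    linarith
  rcases (by omega : T.card = 0 ∨ T.card = 1 ∨ T.card = 2) with h | h | h
  · rw [Finset.card_eq_zero.mp h, Finset.sum_empty]
    have := hnn 0; have := hnn 1; linarith
  · obtain ⟨i, rfl⟩ := Finset.card_eq_one.mp h
    rw [Finset.sum_singleton]
    have h1 : y i ≤ y 0 := hmono 0 i (Fin.zero_le i)
    have := hnn 1; linarith
  · obtain ⟨i, j, hij, rfl⟩ := Finset.card_eq_two.mp h
    rw [Finset.sum_insert (by simp [hij]), Finset.sum_singleton]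
    rcases lt_or_gt_of_ne hij with hlt | hlt
    · exact key i j hlt
    · have := key j i hlt; linarith


/-- Claim 7 (Claim `count1`): the number of induced 5-cycles containing two
vertex-disjoint funky pairs is at most
`(1/2)·|E_f|·(|E_f| − dn − 1)·((y₁ + y₂ + (y₃+y₄+y₅)/2)·n − 2)`. -/
theorem count_two_disjoint_funky (n : ℕ) (G : SimpleGraph (Fin n))
    (P : Fin n → Fin 5) (hEf : (funkyPairs G P).Nonempty)
    (y : Fin 5 → ℝ) (σ : Equiv.Perm (Fin 5))
    (hy : ∀ i, y i = partFrac P (σ i))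
    (hmono : ∀ i j : Fin 5, i ≤ j → y j ≤ y i) :
    (c5TwoDisjointFunky G P : ℝ) ≤
      (1 / 2) * ((funkyPairs G P).card : ℝ) *
        (((funkyPairs G P).card : ℝ) - dAvg G P * (n : ℝ) - 1) *
        ((y 0 + y 1 + (y 2 + y 3 + y 4) / 2) * (n : ℝ) - 2) := by
  classical
  obtain ⟨⟨u, v⟩, huv⟩ := hEf
  obtain ⟨hult, hfuv⟩ : u < v ∧ Funky G P u v := by simpa [funkyPairs] using huv
  have hPuv : P u ≠ P v := funky_parts_ne G P hfuv
  have hn2 : 2 ≤ n := by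
    by_contra hcon
    push_neg at hcon
    have h1 := u.isLt
    have h2 := v.isLt
    have h3 : (u : ℕ) < (v : ℕ) := hult
    omega
  have hn0 : (0 : ℝ) < (n : ℝ) := by
    have : 0 < n := by omega
    exact_mod_cast this
  have hpf : ∀ t, partFrac P t = (Xc P t : ℝ) / (n : ℝ) := by
    intro t
    unfold partFrac Xc
    rw [Nat.card_eq_fintype_card, Fintype.card_subtype]
  have hy' : ∀ i, y i = (Xc P (σ i) : ℝ) / (n : ℝ) := fun i => by rw [hy i, hpf]
  have hynn : ∀ i, 0 ≤ y i := fun i => by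
    rw [hy' i]; positivity
  have hXcy : ∀ t, (Xc P t : ℝ) = y (σ.symm t) * (n : ℝ) := by
    intro t
    rw [hy' (σ.symm t), Equiv.apply_symm_apply, div_mul_cancel₀ _ (ne_of_gt hn0)]
  have hy5 : y 0 + y 1 + y 2 + y 3 + y 4 = 1 := by
    have h1 : ∑ i : Fin 5, y i = ∑ i : Fin 5, (Xc P (σ i) : ℝ) / (n : ℝ) :=
      Finset.sum_congr rfl (fun i _ => hy' i)
    have h2 : ∑ i : Fin 5, (Xc P (σ i) : ℝ) / (n : ℝ)
        = (∑ i : Fin 5, (Xc P (σ i) : ℝ)) / (n : ℝ) := by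
      rw [Finset.sum_div]
    have h3 : ∑ i : Fin 5, (Xc P (σ i) : ℝ) = ∑ t : Fin 5, (Xc P t : ℝ) :=
      Equiv.sum_comp σ (fun t => (Xc P t : ℝ))
    have h4 := Xc_total P
    have h5 : ∑ i : Fin 5, y i = 1 := by
      rw [h1, h2, h3, h4, div_self (ne_of_gt hn0)]
    rw [Fin.sum_univ_five] at h5
    exact h5
  have hCle : ∀ T : Finset (Fin 5), T.card ≤ 2 →
      (∑ t ∈ T, (Xc P t : ℝ)) ≤ (y 0 + y 1) * (n : ℝ) := by
    intro T hT
    have he : ∑ t ∈ T, (Xc P t : ℝ) = (∑ t ∈ T, y (σ.symm t)) * (n : ℝ) := by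
      rw [Finset.sum_mul]
      exact Finset.sum_congr rfl (fun t _ => hXcy t)
    rw [he]
    have himg : ∑ t ∈ T, y (σ.symm t) = ∑ i ∈ T.image σ.symm, y i :=
      (Finset.sum_image (fun x _ x' _ h => σ.symm.injective h)).symm
    have hcard : (T.image σ.symm).card ≤ 2 := le_trans Finset.card_image_le hT
    have hb := pair_y_bound y hmono hynn _ hcard
    rw [himg]
    exact mul_le_mul_of_nonneg_right hb (le_of_lt hn0)
  have hXu : (1 : ℝ) ≤ (Xc P (P u) : ℝ) := by
    have : 0 < Xc P (P u) :=
      Finset.card_pos.mpr ⟨u, Finset.mem_filter.mpr ⟨Finset.mem_univ _, rfl⟩⟩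
    exact_mod_cast this
  have hXv : (1 : ℝ) ≤ (Xc P (P v) : ℝ) := by
    have : 0 < Xc P (P v) :=
      Finset.card_pos.mpr ⟨v, Finset.mem_filter.mpr ⟨Finset.mem_univ _, rfl⟩⟩
    exact_mod_cast this
  have hC2 : (2 : ℝ) ≤ (y 0 + y 1) * (n : ℝ) := by
    have hT : ({P u, P v} : Finset (Fin 5)).card ≤ 2 := by
      refine le_trans (Finset.card_insert_le _ _) ?_
      rw [Finset.card_singleton]
    have hle := hCle {P u, P v} hT
    rw [Finset.sum_insert (by simp [hPuv]), Finset.sum_singleton] at hle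
    linarith
  have hLHS : (c5TwoDisjointFunky G P : ℝ) = ((SFam G P).card : ℝ) := by
    have h : c5TwoDisjointFunky G P = (SFam G P).card := by
      unfold c5TwoDisjointFunky SFam SPred
      rw [Nat.card_eq_fintype_card, Fintype.card_subtype]
      congr
    exact_mod_cast h
  have hNc1 : (1 : ℝ) ≤ ((funkyPairs G P).card : ℝ) := by
    have : 0 < (funkyPairs G P).card := Finset.card_pos.mpr ⟨(u, v), huv⟩
    exact_mod_cast this
  have hNcne : ((funkyPairs G P).card : ℝ) ≠ 0 := by linarith
  have hD := Dord_card_eq G P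
  have hdAvg : dAvg G P * (n : ℝ)
      = (∑ p ∈ funkyPairs G P, ((fdeg G P p.1 : ℝ) + (fdeg G P p.2 : ℝ) - 2))
        / ((funkyPairs G P).card : ℝ) := by
    unfold dAvg
    field_simp
    try ring
  have hRHSfact : (1 / 2) * ((funkyPairs G P).card : ℝ)
      * (((funkyPairs G P).card : ℝ) - dAvg G P * (n : ℝ) - 1)
      = ((Dord G P).card : ℝ) / 2 := by
    rw [hdAvg]
    have hexp : ((funkyPairs G P).card : ℝ) * (((funkyPairs G P).card : ℝ)
        - (∑ p ∈ funkyPairs G P, ((fdeg G P p.1 : ℝ) + (fdeg G P p.2 : ℝ) - 2))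
          / ((funkyPairs G P).card : ℝ) - 1)
        = ((funkyPairs G P).card : ℝ) * ((funkyPairs G P).card : ℝ)
          - (∑ p ∈ funkyPairs G P, ((fdeg G P p.1 : ℝ) + (fdeg G P p.2 : ℝ) - 2))
          - ((funkyPairs G P).card : ℝ) := by
      field_simp
      try ring
    linarith [hexp]
  have hYB : ((y 0 + y 1 + (y 2 + y 3 + y 4) / 2) * (n : ℝ) - 2)
      = ((n : ℝ) - 4 + (y 0 + y 1) * (n : ℝ)) / 2 := by
    have h1 : (y 2 + y 3 + y 4) = 1 - (y 0 + y 1) := by linarith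
    rw [h1]
    ring
  have hn2' : (2 : ℝ) ≤ (n : ℝ) := by exact_mod_cast hn2
  have hmain := main_count G P ((y 0 + y 1) * (n : ℝ)) (by linarith) hCle
  rw [hLHS]
  have hfinal : (1 / 2) * ((funkyPairs G P).card : ℝ)
      * (((funkyPairs G P).card : ℝ) - dAvg G P * (n : ℝ) - 1)
      * ((y 0 + y 1 + (y 2 + y 3 + y 4) / 2) * (n : ℝ) - 2)
      = ((Dord G P).card : ℝ) * (((n : ℝ) - 4 + (y 0 + y 1) * (n : ℝ)) / 4) := by
    rw [hRHSfact, hYB]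
    ring
  rw [hfinal]
  exact hmain
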